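/- If F ∈ M_N(ℝ) is symmetric, then for every A ∈ M_N(ℝ) the commutator [A, F∘A] has all diagonal entries equal to zero; consequently, with B(A) defined from F via the Markov prescription, the commutator [A, B(A)] also has zero diagonal, so that along any solution of the Lax equation Ȧ = [A, B(A)] the diagonal entries of A are constant in time. -/

import Mathlib

open Matrix BigOperators Finset

/-- The commutator of two real `N × N` matrices. -/
def matComm {N : ℕ} (A B : Matrix (Fin N) (Fin N) ℝ) : Matrix (Fin N) (Fin N) ℝ :=
  A * B - B * A

/-- The Markov prescription: `B(A)_{ij} = F_{ij} A_{ij}` off the diagonal and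
`B(A)_{ii} = -∑_{j ≠ i} B(A)_{ij}`. -/
def BofA {N : ℕ} (F A : Matrix (Fin N) (Fin N) ℝ) : Matrix (Fin N) (Fin N) ℝ :=
  Matrix.of fun i j =>
    if i = j then -∑ k ∈ Finset.univ.filter (fun k => k ≠ i), F i k * A i k
    else F i j * A i j

/-- If `F` is symmetric, then `[A, F∘A]` and `[A, B(A)]` have zero diagonal for every
`A`; consequently, along any solution of the Lax equation `Ȧ = [A, B(A)]` on an
interval, the diagonal entries of `A` are constant in time. -/
theorem diagonal_conserved (N : ℕ) (F : Matrix (Fin N) (Fin N) ℝ) (hF : F.IsSymm) :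
    (∀ (A : Matrix (Fin N) (Fin N) ℝ) (i : Fin N),
      matComm A (Matrix.hadamard F A) i i = 0) ∧
    (∀ (A : Matrix (Fin N) (Fin N) ℝ) (i : Fin N),
      matComm A (BofA F A) i i = 0) ∧
    (∀ (I : Set ℝ), I.OrdConnected →
      ∀ A : ℝ → Matrix (Fin N) (Fin N) ℝ,
        (∀ t ∈ I, ∀ i j, HasDerivAt (fun s => A s i j)
          (matComm (A t) (BofA F (A t)) i j) t) →
        ∀ (i : Fin N), ∀ t₁ ∈ I, ∀ t₂ ∈ I, A t₁ i i = A t₂ i i) := by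
  have hFsym : ∀ i k : Fin N, F k i = F i k := by
    intro i k
    have := congrFun (congrFun hF k) i
    simpa [Matrix.transpose_apply] using this.symm
  have key : ∀ (A B : Matrix (Fin N) (Fin N) ℝ) (i : Fin N),
      (∀ k, k ≠ i → B k i = F k i * A k i) →
      (∀ k, k ≠ i → B i k = F i k * A i k) →
      matComm A B i i = 0 := by
    intro A B i h1 h2
    simp only [matComm, Matrix.sub_apply, Matrix.mul_apply]
    rw [sub_eq_zero]
    refine Finset.sum_congr rfl fun k _ => ?_
    by_cases hk : k = i
    · subst hk; ring
    · rw [h1 k hk, h2 k hk, hFsym i k]; ring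
  have part1 : ∀ (A : Matrix (Fin N) (Fin N) ℝ) (i : Fin N),
      matComm A (Matrix.hadamard F A) i i = 0 := by
    intro A i
    exact key A _ i (fun k _ => rfl) (fun k _ => rfl)
  have part2 : ∀ (A : Matrix (Fin N) (Fin N) ℝ) (i : Fin N),
      matComm A (BofA F A) i i = 0 := by
    intro A i
    refine key A _ i (fun k hk => ?_) (fun k hk => ?_)
    · simp [BofA, hk]
    · simp [BofA, hk.symm]
  refine ⟨part1, part2, ?_⟩
  intro I hI A hA i t₁ ht₁ t₂ ht₂
  have hderiv : ∀ t ∈ I, HasDerivAt (fun s => A s i i) 0 t := by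
    intro t ht
    have := hA t ht i i
    rwa [part2] at this
  have const : ∀ a b : ℝ, a ∈ I → b ∈ I → a ≤ b → A b i i = A a i i := by
    intro a b ha hb hab
    have hsub : Set.Icc a b ⊆ I := hI.out ha hb
    have := constant_of_has_deriv_right_zero
      (f := fun s => A s i i) (a := a) (b := b)
      (fun x hx => (hderiv x (hsub hx)).continuousAt.continuousWithinAt)
      (fun x hx => (hderiv x (hsub (Set.Ico_subset_Icc_self hx))).hasDerivWithinAt)
    exact this b (Set.right_mem_Icc.mpr hab)
  rcases le_total t₁ t₂ with h | h
  · exact (const t₁ t₂ ht₁ ht₂ h).symm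
  · exact const t₂ t₁ ht₂ ht₁ h
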